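/- Let A be an n×n real matrix and let V_1 ∪ … ∪ V_m be an equitable partition of {1,…,n} for A, with characteristic matrix S, Λ = diag(|V_1|,…,|V_m|), and quotient B = Q(A) = Λ⁻¹ Sᵀ A S. Then the matrix exponential satisfies exp(B) = Λ⁻¹ Sᵀ exp(A) S, i.e., exp(Q(A)) = Q(exp(A)). -/

import Mathlib

open Matrix Finset

theorem aux_exp_intertwine {n m : ℕ} (A : Matrix (Fin n) (Fin n) ℝ)
    (B : Matrix (Fin m) (Fin m) ℝ) (S : Matrix (Fin n) (Fin m) ℝ)
    (h : A * S = S * B) :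
    NormedSpace.exp A * S = S * NormedSpace.exp B := by
  have hpow : ∀ k : ℕ, A ^ k * S = S * B ^ k := by
    intro k
    induction k with
    | zero => simp
    | succ k ih => rw [pow_succ, pow_succ, Matrix.mul_assoc, h, ← Matrix.mul_assoc, ih, Matrix.mul_assoc]
  have hsumA : Summable (fun k : ℕ => (Nat.factorial k : ℝ)⁻¹ • A ^ k) := by
    letI := Matrix.linftyOpNormedRing (n := Fin n) (α := ℝ)
    letI := Matrix.linftyOpNormedAlgebra (n := Fin n) (R := ℝ) (α := ℝ)
    exact NormedSpace.expSeries_summable' A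
  have hsumB : Summable (fun k : ℕ => (Nat.factorial k : ℝ)⁻¹ • B ^ k) := by
    letI := Matrix.linftyOpNormedRing (n := Fin m) (α := ℝ)
    letI := Matrix.linftyOpNormedAlgebra (n := Fin m) (R := ℝ) (α := ℝ)
    exact NormedSpace.expSeries_summable' B
  let f : Matrix (Fin n) (Fin n) ℝ →ₗ[ℝ] Matrix (Fin n) (Fin m) ℝ :=
    { toFun := fun X => X * S
      map_add' := fun X Y => Matrix.add_mul X Y S
      map_smul' := fun c X => Matrix.smul_mul c X S }
  let g : Matrix (Fin m) (Fin m) ℝ →ₗ[ℝ] Matrix (Fin n) (Fin m) ℝ :=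
    { toFun := fun Y => S * Y
      map_add' := fun X Y => Matrix.mul_add S X Y
      map_smul' := fun c X => Matrix.mul_smul S c X }
  have hf : Continuous f := f.continuous_of_finiteDimensional
  have hg : Continuous g := g.continuous_of_finiteDimensional
  have h1 : HasSum (fun k : ℕ => f ((Nat.factorial k : ℝ)⁻¹ • A ^ k)) (f (NormedSpace.exp A)) := by
    rw [NormedSpace.exp_eq_tsum (𝕂 := ℝ)]
    exact hsumA.hasSum.map f hf
  have h2 : HasSum (fun k : ℕ => g ((Nat.factorial k : ℝ)⁻¹ • B ^ k)) (g (NormedSpace.exp B)) := by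
    rw [NormedSpace.exp_eq_tsum (𝕂 := ℝ)]
    exact hsumB.hasSum.map g hg
  have hfg : (fun k : ℕ => f ((Nat.factorial k : ℝ)⁻¹ • A ^ k)) = fun k : ℕ => g ((Nat.factorial k : ℝ)⁻¹ • B ^ k) := by
    funext k
    simp only [f, g, LinearMap.coe_mk, AddHom.coe_mk, Matrix.smul_mul, Matrix.mul_smul, hpow k]
  rw [hfg] at h1
  exact h1.unique h2


/-- Let `A` be an `n×n` real matrix and let `V_1 ∪ … ∪ V_m` be an equitable
partition of `{1,…,n}` for `A` (given by the surjective block-assignment map `p`), with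
characteristic matrix `S`, `Λ = diag(|V_1|,…,|V_m|)`, and quotient `B = Q(A) = Λ⁻¹ Sᵀ A S`.
Then the matrix exponential satisfies `exp(B) = Λ⁻¹ Sᵀ exp(A) S`, i.e.
`exp(Q(A)) = Q(exp(A))`. -/
theorem exp_quotient_comm {n m : ℕ} (A : Matrix (Fin n) (Fin n) ℝ)
    (p : Fin n → Fin m) (hp : Function.Surjective p)
    (S : Matrix (Fin n) (Fin m) ℝ)
    (hS : S = fun i k => if p i = k then (1 : ℝ) else 0)
    (heq : ∀ i₁ i₂ : Fin n, p i₁ = p i₂ → ∀ l : Fin m,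
        ∑ j ∈ Finset.univ.filter (fun j => p j = l), A i₁ j
          = ∑ j ∈ Finset.univ.filter (fun j => p j = l), A i₂ j)
    (Λ : Matrix (Fin m) (Fin m) ℝ)
    (hΛ : Λ = Matrix.diagonal fun k => ((Finset.univ.filter fun i => p i = k).card : ℝ))
    (B : Matrix (Fin m) (Fin m) ℝ) (hB : B = Λ⁻¹ * Sᵀ * A * S) :
    NormedSpace.exp B = Λ⁻¹ * Sᵀ * NormedSpace.exp A * S := by
  set c : Fin m → ℝ := fun k => ((Finset.univ.filter fun i => p i = k).card : ℝ) with hc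
  have hcard : ∀ k, c k ≠ 0 := by
    intro k
    have : (Finset.univ.filter fun i => p i = k).Nonempty := by
      obtain ⟨i, hi⟩ := hp k
      exact ⟨i, by simp [hi]⟩
    simpa [hc] using Finset.card_ne_zero.mpr this
  have hΛinv : Λ⁻¹ = Matrix.diagonal (fun k => (c k)⁻¹) := by
    apply Matrix.inv_eq_right_inv
    rw [hΛ, Matrix.diagonal_mul_diagonal]
    rw [show (fun k => c k * (c k)⁻¹) = fun _ => (1:ℝ) from
      funext fun k => mul_inv_cancel₀ (hcard k)]
    exact Matrix.diagonal_one
  have hΛΛ : Λ⁻¹ * Λ = 1 := by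
    rw [hΛinv, hΛ, Matrix.diagonal_mul_diagonal]
    rw [show (fun k => (c k)⁻¹ * c k) = fun _ => (1:ℝ) from
      funext fun k => inv_mul_cancel₀ (hcard k)]
    exact Matrix.diagonal_one
  set r : Fin n → Fin m → ℝ := fun i l => ∑ j ∈ Finset.univ.filter (fun j => p j = l), A i j
    with hr
  have hAS : ∀ i l, (A * S) i l = r i l := by
    intro i l
    rw [Matrix.mul_apply, hr]
    simp only [hS]
    rw [Finset.sum_filter]
    congr 1
    funext j
    by_cases h : p j = l <;> simp [h]
  have hStS : Sᵀ * S = Λ := by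
    ext k l
    rw [Matrix.mul_apply, hΛ]
    simp only [Matrix.transpose_apply]
    simp only [hS]
    by_cases h : k = l
    · subst h
      have e : (∑ x : Fin n, (if p x = k then (1:ℝ) else 0) * (if p x = k then (1:ℝ) else 0))
          = ∑ x : Fin n, if p x = k then (1:ℝ) else 0 :=
        Finset.sum_congr rfl fun x _ => by by_cases h1 : p x = k <;> simp [h1]
      rw [e, Finset.sum_boole]
      simp [Matrix.diagonal_apply_eq, hc]
    · rw [Matrix.diagonal_apply_ne _ h]
      apply Finset.sum_eq_zero
      intro i _
      by_cases h1 : p i = k <;> by_cases h2 : p i = l <;> simp_all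
  -- the key identity A S = S B
  have hBr : ∀ (i : Fin n) (l : Fin m), B (p i) l = r i l := by
    intro i l
    have e1 : ∀ i', (Sᵀ) (p i) i' * (A * S) i' l = if p i' = p i then r i' l else 0 := by
      intro i'
      rw [hAS]
      simp only [Matrix.transpose_apply]
      simp only [hS]
      by_cases h : p i' = p i <;> simp [h]
    have e2 : ((Sᵀ) * (A * S)) (p i) l = c (p i) * r i l := by
      rw [Matrix.mul_apply]
      calc ∑ i', (Sᵀ) (p i) i' * (A * S) i' l
          = ∑ i', if p i' = p i then r i' l else 0 := Finset.sum_congr rfl fun i' _ => e1 i'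
        _ = ∑ i' ∈ Finset.univ.filter (fun i' => p i' = p i), r i' l :=
            (Finset.sum_filter _ _).symm
        _ = ∑ i' ∈ Finset.univ.filter (fun i' => p i' = p i), r i l :=
            Finset.sum_congr rfl fun i' hi' => heq i' i (Finset.mem_filter.mp hi').2 l
        _ = c (p i) * r i l := by rw [Finset.sum_const, nsmul_eq_mul]
    rw [hB, Matrix.mul_assoc, Matrix.mul_assoc, hΛinv, Matrix.diagonal_mul, e2,
      ← mul_assoc, inv_mul_cancel₀ (hcard (p i)), one_mul]
  have hASB : A * S = S * B := by
    ext i l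
    rw [hAS, Matrix.mul_apply]
    have : ∀ k, S i k * B k l = if p i = k then B k l else 0 := by
      intro k
      simp only [hS]
      by_cases h : p i = k <;> simp [h]
    rw [Finset.sum_congr rfl fun k _ => this k]
    rw [Finset.sum_ite_eq]
    simp [hBr i l]
  have key := aux_exp_intertwine A B S hASB
  calc NormedSpace.exp B
      = (Λ⁻¹ * Λ) * NormedSpace.exp B := by rw [hΛΛ, one_mul]
    _ = Λ⁻¹ * (Sᵀ * S) * NormedSpace.exp B := by rw [hStS]
    _ = Λ⁻¹ * Sᵀ * (S * NormedSpace.exp B) := by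
        rw [Matrix.mul_assoc, Matrix.mul_assoc, Matrix.mul_assoc]
    _ = Λ⁻¹ * Sᵀ * (NormedSpace.exp A * S) := by rw [key]
    _ = Λ⁻¹ * Sᵀ * NormedSpace.exp A * S := by simp only [Matrix.mul_assoc]
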